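/- Let U ⊆ ℝ^N be open, Y a separable metric space, and f : U → Y a Lipschitz function. Then for almost every x₀ ∈ U, lip(f)(x₀) = sup_{p ∈ Y} ‖∇ d(f(·),p)(x₀)‖, where for each p ∈ Y the function x ↦ d(f(x),p) is Lipschitz (hence a.e. differentiable) and its gradient norm is taken to be 0 at non-differentiability points. -/

import Mathlib

open Filter Topology MeasureTheory

/-- The pointwise Lipschitz constant of `f` at `x` relative to the set `U`. -/
noncomputable def lipOn {E Y : Type*} [NormedAddCommGroup E] [MetricSpace Y]
    (f : E → Y) (U : Set E) (x : E) : ℝ :=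
  limsup (fun y => dist (f y) (f x) / dist y x) (𝓝[U \ {x}] x)

open Metric Convolution

abbrev Esp (N : ℕ) := EuclideanSpace ℝ (Fin N)

section Aux

variable {N : ℕ} {Y : Type*} [MetricSpace Y]

lemma nhds_eq {U : Set (EuclideanSpace ℝ (Fin N))} (hU : IsOpen U)
    {x : EuclideanSpace ℝ (Fin N)} (hx : x ∈ U) : 𝓝[U \ {x}] x = 𝓝[≠] x := by
  rw [Set.diff_eq, Set.inter_comm]
  exact nhdsWithin_inter_of_mem' (nhdsWithin_le_nhds (hU.mem_nhds hx))

lemma neBot_of (hN : 0 < N) {U : Set (EuclideanSpace ℝ (Fin N))} (hU : IsOpen U)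
    {x : EuclideanSpace ℝ (Fin N)} (hx : x ∈ U) : (𝓝[U \ {x}] x).NeBot := by
  rw [nhds_eq hU hx]
  have : Nontrivial (EuclideanSpace ℝ (Fin N)) :=
    Module.nontrivial_of_finrank_pos (R := ℝ) (by rw [finrank_euclideanSpace_fin]; omega)
  exact Module.punctured_nhds_neBot ℝ _ x

lemma bddK {U : Set (EuclideanSpace ℝ (Fin N))} {f : EuclideanSpace ℝ (Fin N) → Y}
    {K : NNReal} (hf : LipschitzOnWith K f U) {x : EuclideanSpace ℝ (Fin N)} (hx : x ∈ U) :
    ∀ᶠ y in 𝓝[U \ {x}] x, dist (f y) (f x) / dist y x ≤ (K : ℝ) := by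
  filter_upwards [self_mem_nhdsWithin] with y hy
  have hyx : y ≠ x := hy.2
  have hd : 0 < dist y x := dist_pos.2 hyx
  rw [div_le_iff₀ hd]
  exact hf.dist_le_mul y hy.1 x hx

lemma lipOn_nonneg (hN : 0 < N) {U : Set (EuclideanSpace ℝ (Fin N))} (hU : IsOpen U)
    {f : EuclideanSpace ℝ (Fin N) → Y} {K : NNReal} (hf : LipschitzOnWith K f U)
    {x : EuclideanSpace ℝ (Fin N)} (hx : x ∈ U) : 0 ≤ lipOn f U x := by
  have := neBot_of hN hU hx
  refine le_limsup_of_frequently_le ?_ ⟨K, bddK hf hx⟩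
  exact (Eventually.of_forall fun y => div_nonneg dist_nonneg dist_nonneg).frequently

/-- Easy direction: each distance-gradient is bounded by the pointwise Lipschitz constant. -/
lemma easy_dir (hN : 0 < N) {U : Set (EuclideanSpace ℝ (Fin N))} (hU : IsOpen U)
    {f : EuclideanSpace ℝ (Fin N) → Y} {K : NNReal} (hf : LipschitzOnWith K f U)
    {x : EuclideanSpace ℝ (Fin N)} (hx : x ∈ U) :
    ⨆ p : Y, ‖fderiv ℝ (fun z => dist (f z) p) x‖ ≤ lipOn f U x := by
  have : Nonempty Y := ⟨f x⟩
  have hne := neBot_of hN hU hx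
  have hnonneg := lipOn_nonneg hN hU hf hx
  refine ciSup_le fun p => ?_
  by_cases hd : DifferentiableAt ℝ (fun z => dist (f z) p) x
  · set D := fderiv ℝ (fun z => dist (f z) p) x with hD
    -- enough: ∀ ε > 0, ‖D‖ ≤ lipOn f U x + ε
    refine le_of_forall_pos_le_add fun ε hε => ?_
    rcases lt_or_ge ‖D‖ ε with h | h
    · linarith
    obtain ⟨v, hv1, hv2⟩ := D.exists_lt_apply_of_lt_opNorm (show ‖D‖ - ε/2 < ‖D‖ by linarith)
    have hv0 : v ≠ 0 := by
      rintro rfl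
      simp only [map_zero, norm_zero] at hv2
      linarith
    have hvpos : 0 < ‖v‖ := norm_pos_iff.2 hv0
    set w : EuclideanSpace ℝ (Fin N) := ‖v‖⁻¹ • v with hw
    have hwn : ‖w‖ = 1 := by
      rw [hw, norm_smul, norm_inv, norm_norm, inv_mul_cancel₀ hvpos.ne']
    have hDw : ‖D‖ - ε/2 < ‖D w‖ := by
      have : ‖D w‖ = ‖v‖⁻¹ * ‖D v‖ := by
        rw [hw, D.map_smul, norm_smul, norm_inv, norm_norm]
      have h2 : ‖D v‖ ≤ ‖v‖⁻¹ * ‖D v‖ := by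
        nth_rewrite 1 [show ‖D v‖ = 1 * ‖D v‖ by ring]
        have : (1:ℝ) ≤ ‖v‖⁻¹ := (one_le_inv₀ hvpos).2 hv1.le
        exact mul_le_mul_of_nonneg_right this (norm_nonneg _)
      linarith
    -- curve
    set ψ : ℝ → EuclideanSpace ℝ (Fin N) := fun t => x + t • w with hψ
    have hcurve : HasDerivAt ψ w 0 := by
      simpa [hψ] using ((hasDerivAt_id (0:ℝ)).smul_const w).const_add x
    have hcomp : HasDerivAt (fun t => dist (f (ψ t)) p) (D w) 0 := by
      have h0 : ψ 0 = x := by simp [hψ]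
      have hd' : HasFDerivAt (fun z => dist (f z) p) D (ψ 0) := h0 ▸ hd.hasFDerivAt
      have := hd'.comp_hasDerivAt 0 hcurve
      simpa [hψ, Function.comp_def] using this
    have hslope : Tendsto (fun t : ℝ => t⁻¹ * (dist (f (ψ t)) p - dist (f x) p)) (𝓝[>] 0)
        (𝓝 (D w)) := by
      have := hcomp.tendsto_slope_zero_right
      simp only [smul_eq_mul] at this
      have h0 : ψ 0 = x := by simp [hψ]
      simpa [h0] using this
    have habs : Tendsto (fun t : ℝ => |t⁻¹ * (dist (f (ψ t)) p - dist (f x) p)|) (𝓝[>] 0)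
        (𝓝 |D w|) := hslope.abs
    have hev1 : ∀ᶠ t in 𝓝[>] (0:ℝ), ‖D‖ - ε/2 < |t⁻¹ * (dist (f (ψ t)) p - dist (f x) p)| := by
      refine habs.eventually_const_lt ?_
      calc ‖D‖ - ε/2 < ‖D w‖ := hDw
        _ = |D w| := rfl
    have hψc : Tendsto ψ (𝓝[>] (0:ℝ)) (𝓝 x) := by
      have h0 : ψ 0 = x := by simp [hψ]
      have h1 : Tendsto ψ (𝓝[>] (0:ℝ)) (𝓝 (ψ 0)) :=
        (hcurve.continuousAt.tendsto).mono_left (nhdsWithin_le_nhds (s := Set.Ioi 0))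
      rwa [h0] at h1
    have hevU : ∀ᶠ t in 𝓝[>] (0:ℝ), ψ t ∈ U \ {x} := by
      have hU' : ∀ᶠ t in 𝓝[>] (0:ℝ), ψ t ∈ U := hψc.eventually (hU.mem_nhds hx)
      filter_upwards [hU', self_mem_nhdsWithin] with t htU ht
      refine ⟨htU, ?_⟩
      simp only [Set.mem_singleton_iff, hψ]
      intro hcontra
      have : t • w = 0 := by
        have := hcontra
        apply_fun (· - x) at this
        simpa [add_sub_cancel_left] using this
      rcases smul_eq_zero.1 this with h | h
      · exact absurd h (ne_of_gt ht)
      · rw [h, norm_zero] at hwn; norm_num at hwn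
    -- relate to the quotient
    have hkey : ∀ᶠ t in 𝓝[>] (0:ℝ),
        ‖D‖ - ε/2 ≤ dist (f (ψ t)) (f x) / dist (ψ t) x := by
      filter_upwards [hev1, self_mem_nhdsWithin] with t h1 ht
      have htpos : (0:ℝ) < t := ht
      have hdist : dist (ψ t) x = t := by
        simp only [hψ, dist_eq_norm, add_sub_cancel_left, norm_smul, hwn, Real.norm_eq_abs]
        rw [abs_of_pos htpos, mul_one]
      have hbound : |dist (f (ψ t)) p - dist (f x) p| ≤ dist (f (ψ t)) (f x) :=
        abs_dist_sub_le _ _ _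
      have : |t⁻¹ * (dist (f (ψ t)) p - dist (f x) p)| ≤ dist (f (ψ t)) (f x) / t := by
        rw [abs_mul, abs_inv, abs_of_pos htpos, div_eq_inv_mul]
        exact mul_le_mul_of_nonneg_left hbound (by positivity)
      rw [hdist]
      linarith
    have hfreq : ∃ᶠ y in 𝓝[U \ {x}] x, ‖D‖ - ε/2 ≤ dist (f y) (f x) / dist y x := by
      have hmap : Tendsto ψ (𝓝[>] (0:ℝ)) (𝓝[U \ {x}] x) :=
        tendsto_nhdsWithin_iff.2 ⟨hψc, hevU⟩
      exact hmap.frequently ((hkey).frequently)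
    have := le_limsup_of_frequently_le hfreq ⟨K, bddK hf hx⟩
    have hlip : lipOn f U x = limsup (fun y => dist (f y) (f x) / dist y x) (𝓝[U \ {x}] x) := rfl
    rw [hlip]
    linarith
  · rw [fderiv_zero_of_not_differentiableAt hd]
    simpa using hnonneg

end Aux


section Conv

variable {N : ℕ}

lemma integrable_rho_mul (ρb : ContDiffBump (0 : Esp N)) {G : Esp N → ℝ} (hGc : Continuous G)
    (a : Esp N) : Integrable (fun z => ρb.normed volume z * G (a - z)) volume := by
  apply Continuous.integrable_of_hasCompactSupport
  · exact ρb.continuous_normed.mul (hGc.comp (continuous_const.sub continuous_id))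
  · apply HasCompactSupport.mul_right ρb.hasCompactSupport_normed

lemma conv_eq (ρb : ContDiffBump (0 : Esp N)) (G : Esp N → ℝ) (w : Esp N) :
    (ρb.normed volume ⋆[ContinuousLinearMap.lsmul ℝ ℝ, volume] G) w
      = ∫ z, ρb.normed volume z * G (w - z) := by
  simp only [convolution_def, ContinuousLinearMap.lsmul_apply, smul_eq_mul]

lemma conv_smooth (ρb : ContDiffBump (0 : Esp N)) {G : Esp N → ℝ} (hGc : Continuous G) :
    ContDiff ℝ 1 (ρb.normed volume ⋆[ContinuousLinearMap.lsmul ℝ ℝ, volume] G) :=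
  HasCompactSupport.contDiff_convolution_left _ ρb.hasCompactSupport_normed
    ρb.contDiff_normed hGc.locallyIntegrable

lemma conv_approx (ρb : ContDiffBump (0 : Esp N)) {G : Esp N → ℝ} {K : NNReal}
    (hG : LipschitzWith K G) (w : Esp N) :
    |(ρb.normed volume ⋆[ContinuousLinearMap.lsmul ℝ ℝ, volume] G) w - G w| ≤ K * ρb.rOut := by
  have hGc := hG.continuous
  rw [conv_eq]
  have h1 : G w = ∫ z, ρb.normed volume z * G w := by
    rw [integral_mul_const, ρb.integral_normed, one_mul]
  rw [h1, ← integral_sub (integrable_rho_mul ρb hGc w) (ρb.integrable_normed.mul_const _)]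
  have h2 : ∀ z, ρb.normed volume z * G (w - z) - ρb.normed volume z * G w
      = ρb.normed volume z * (G (w - z) - G w) := fun z => by ring
  simp only [h2]
  have hb : ∀ z, ‖ρb.normed volume z * (G (w - z) - G w)‖
      ≤ ρb.normed volume z * (K * ρb.rOut) := by
    intro z
    by_cases hz : ρb.normed volume z = 0
    · simp [hz, mul_nonneg (mul_nonneg K.coe_nonneg ρb.rOut_pos.le)]
    · have hzs : z ∈ Metric.ball (0 : Esp N) ρb.rOut := by
        rw [← ρb.support_normed_eq (μ := volume)]; exact hz
      rw [Metric.mem_ball, dist_zero_right] at hzs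
      have hlip : |G (w - z) - G w| ≤ K * ‖z‖ := by
        have := hG.dist_le_mul (w - z) w
        rw [Real.dist_eq, dist_eq_norm] at this
        simpa [sub_sub_cancel_left, norm_neg] using this
      rw [norm_mul, Real.norm_eq_abs (G _ - G w),
        Real.norm_eq_abs, abs_of_nonneg (ρb.nonneg_normed z)]
      exact mul_le_mul (le_refl _) (hlip.trans (by nlinarith [K.coe_nonneg])) (abs_nonneg _)
        (ρb.nonneg_normed z)
  calc |∫ z, ρb.normed volume z * (G (w - z) - G w)|
      ≤ ∫ z, ρb.normed volume z * (K * ρb.rOut) :=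
        norm_integral_le_of_norm_le (ρb.integrable_normed.mul_const _)
          (Eventually.of_forall hb)
    _ = K * ρb.rOut := by rw [integral_mul_const, ρb.integral_normed, one_mul]

lemma conv_deriv_bound (ρb : ContDiffBump (0 : Esp N)) {G : Esp N → ℝ} {K : NNReal}
    (hG : LipschitzWith K G) {h : Esp N → ℝ} (h_meas : Measurable h)
    (h_leK : ∀ u, h u ≤ (K : ℝ)) (h_nonneg : ∀ u, 0 ≤ h u)
    (h_ge : ∀ u, ‖fderiv ℝ G u‖ ≤ h u) (w v : Esp N) :
    |fderiv ℝ (ρb.normed volume ⋆[ContinuousLinearMap.lsmul ℝ ℝ, volume] G) w v|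
      ≤ (∫ z, ρb.normed volume z * h (w - z)) * ‖v‖ := by
  have hGc := hG.continuous
  set ρ := ρb.normed volume with hρ
  set c := ρb.normed volume ⋆[ContinuousLinearMap.lsmul ℝ ℝ, volume] G with hc
  -- derivative as limit of slopes
  have hsm := conv_smooth ρb hGc
  have hder : HasDerivAt (fun s : ℝ => c (w + s • v)) (fderiv ℝ c w v) 0 := by
    have hcurve : HasDerivAt (fun s : ℝ => w + s • v) v 0 := by
      simpa using ((hasDerivAt_id (0:ℝ)).smul_const v).const_add w
    have hd' : HasFDerivAt c (fderiv ℝ c w) (w + (0:ℝ) • v) := by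
      simpa using ((hsm.differentiable one_ne_zero) w).hasFDerivAt
    exact hd'.comp_hasDerivAt 0 hcurve
  have hs1 : Tendsto (fun s : ℝ => s⁻¹ * (c (w + s • v) - c w)) (𝓝[>] 0)
      (𝓝 (fderiv ℝ c w v)) := by
    have := hder.tendsto_slope_zero_right
    simpa [smul_eq_mul] using this
  -- slope equals an integral
  set F : ℝ → Esp N → ℝ := fun s z => ρ z * (s⁻¹ * (G (w + s • v - z) - G (w - z))) with hF
  have heq : ∀ s : ℝ, s ≠ 0 → s⁻¹ * (c (w + s • v) - c w) = ∫ z, F s z := by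
    intro s hs
    rw [hc, conv_eq, conv_eq, ← integral_sub (integrable_rho_mul ρb hGc _)
      (integrable_rho_mul ρb hGc _), ← integral_const_mul]
    congr 1
    ext z
    rw [hF]; ring
  have hs1' : Tendsto (fun s : ℝ => ∫ z, F s z) (𝓝[>] 0) (𝓝 (fderiv ℝ c w v)) := by
    apply hs1.congr'
    filter_upwards [self_mem_nhdsWithin] with s hs
    exact heq s (ne_of_gt hs)
  -- dominated convergence
  have hdiffG : ∀ᵐ z ∂(volume : Measure (Esp N)), DifferentiableAt ℝ G (w - z) :=
    (Measure.measurePreserving_sub_left volume w).quasiMeasurePreserving.ae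
      hG.ae_differentiableAt
  have hs2 : Tendsto (fun s : ℝ => ∫ z, F s z) (𝓝[>] 0)
      (𝓝 (∫ z, ρ z * fderiv ℝ G (w - z) v)) := by
    apply tendsto_integral_filter_of_dominated_convergence
      (fun z => ρ z * (K * ‖v‖))
    · filter_upwards [self_mem_nhdsWithin] with s _
      apply Continuous.aestronglyMeasurable
      exact (ρb.continuous_normed).mul (continuous_const.mul
        (((hGc.comp ((continuous_const.add continuous_const).sub continuous_id)).sub
          (hGc.comp (continuous_const.sub continuous_id)))))
    · filter_upwards [self_mem_nhdsWithin] with s hs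
      apply Eventually.of_forall
      intro z
      have hspos : (0:ℝ) < s := hs
      have hlip : |G (w + s • v - z) - G (w - z)| ≤ K * (s * ‖v‖) := by
        have := hG.dist_le_mul (w + s • v - z) (w - z)
        rw [Real.dist_eq, dist_eq_norm] at this
        have harg : w + s • v - z - (w - z) = s • v := by abel
        rw [harg, norm_smul, Real.norm_eq_abs, abs_of_pos hspos] at this
        exact this
      have : |s⁻¹ * (G (w + s • v - z) - G (w - z))| ≤ K * ‖v‖ := by
        rw [abs_mul, abs_inv, abs_of_pos hspos]
        rw [inv_mul_le_iff₀ hspos]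
        calc |G (w + s • v - z) - G (w - z)| ≤ K * (s * ‖v‖) := hlip
          _ = s * (K * ‖v‖) := by ring
      rw [hF]
      simp only
      rw [norm_mul, Real.norm_eq_abs (ρ z), abs_of_nonneg (ρb.nonneg_normed z)]
      exact mul_le_mul_of_nonneg_left (by rwa [Real.norm_eq_abs]) (ρb.nonneg_normed z)
    · exact ρb.integrable_normed.mul_const _
    · filter_upwards [hdiffG] with z hz
      have hcurve : HasDerivAt (fun s : ℝ => w + s • v - z) v 0 := by
        simpa using (((hasDerivAt_id (0:ℝ)).smul_const v).const_add w).sub_const z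
      have hd' : HasFDerivAt G (fderiv ℝ G (w - z)) (w + (0:ℝ) • v - z) := by
        simpa using hz.hasFDerivAt
      have hdz : HasDerivAt (fun s : ℝ => G (w + s • v - z)) (fderiv ℝ G (w - z) v) 0 :=
        hd'.comp_hasDerivAt 0 hcurve
      have hsl := hdz.tendsto_slope_zero_right
      simp only [smul_eq_mul, zero_add, zero_smul, add_zero] at hsl
      have := hsl.const_mul (ρ z)
      simpa [hF] using this
  have hval : fderiv ℝ c w v = ∫ z, ρ z * fderiv ℝ G (w - z) v :=
    tendsto_nhds_unique hs1' hs2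
  rw [hval]
  -- final bound
  have hint : Integrable (fun z => ρ z * h (w - z) * ‖v‖) volume := by
    apply Integrable.mono' (ρb.integrable_normed.mul_const (K * ‖v‖))
    · apply AEStronglyMeasurable.mul _ aestronglyMeasurable_const
      exact (ρb.continuous_normed.measurable.mul
        (h_meas.comp (measurable_const.sub measurable_id))).aestronglyMeasurable
    · apply Eventually.of_forall
      intro z
      rw [Real.norm_eq_abs, abs_of_nonneg (mul_nonneg (mul_nonneg (ρb.nonneg_normed z)
        (h_nonneg _)) (norm_nonneg v)), mul_assoc]
      exact mul_le_mul_of_nonneg_left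
        (mul_le_mul_of_nonneg_right (h_leK _) (norm_nonneg v)) (ρb.nonneg_normed z)
  calc |∫ z, ρ z * fderiv ℝ G (w - z) v| ≤ ∫ z, ρ z * h (w - z) * ‖v‖ := by
        rw [← Real.norm_eq_abs]
        apply norm_integral_le_of_norm_le hint
        apply Eventually.of_forall
        intro z
        rw [norm_mul, Real.norm_eq_abs (ρ z), abs_of_nonneg (ρb.nonneg_normed z), mul_assoc]
        apply mul_le_mul_of_nonneg_left _ (ρb.nonneg_normed z)
        calc ‖fderiv ℝ G (w - z) v‖ ≤ ‖fderiv ℝ G (w - z)‖ * ‖v‖ :=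
              (fderiv ℝ G (w - z)).le_opNorm v
          _ ≤ h (w - z) * ‖v‖ := mul_le_mul_of_nonneg_right (h_ge _) (norm_nonneg v)
    _ = (∫ z, ρ z * h (w - z)) * ‖v‖ := by rw [integral_mul_const]

end Conv


section Avg

variable {N : ℕ}

lemma avg_bound (ρb : ContDiffBump (0 : Esp N)) {h : Esp N → ℝ} (h_meas : Measurable h)
    {C : ℝ} (h_leK : ∀ u, h u ≤ C) (h_nonneg : ∀ u, 0 ≤ h u)
    {x w : Esp N} {r : ℝ} (hr : 0 < r) (hδr : ρb.rOut ≤ r) (hw : dist w x ≤ r) :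
    ∫ z, ρb.normed volume z * h (w - z)
      ≤ h x + (volume (closedBall (0 : Esp N) ρb.rIn)).toReal⁻¹
          * ∫ u in closedBall x (2*r), ‖h u - h x‖ := by
  set ρ := ρb.normed volume with hρ
  have hC : 0 ≤ C := (h_nonneg x).trans (h_leK x)
  have hmeas2 : Measurable fun z => h (w - z) :=
    h_meas.comp (measurable_const.sub measurable_id)
  have hint1 : Integrable (fun z => ρ z * h (w - z)) volume := by
    apply Integrable.mono' (ρb.integrable_normed.mul_const C)
    · exact (ρb.continuous_normed.measurable.mul hmeas2).aestronglyMeasurable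
    · apply Eventually.of_forall; intro z
      rw [Real.norm_eq_abs, abs_of_nonneg (mul_nonneg (ρb.nonneg_normed z) (h_nonneg _))]
      exact mul_le_mul_of_nonneg_left (h_leK _) (ρb.nonneg_normed z)
  have hint3 : Integrable (fun z => ρ z * ‖h (w - z) - h x‖) volume := by
    apply Integrable.mono' (ρb.integrable_normed.mul_const (C + ‖h x‖))
    · exact (ρb.continuous_normed.measurable.mul
        (hmeas2.sub measurable_const).norm).aestronglyMeasurable
    · apply Eventually.of_forall; intro z
      rw [Real.norm_eq_abs, abs_of_nonneg (mul_nonneg (ρb.nonneg_normed z) (norm_nonneg _))]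
      apply mul_le_mul_of_nonneg_left _ (ρb.nonneg_normed z)
      calc ‖h (w - z) - h x‖ ≤ ‖h (w - z)‖ + ‖h x‖ := norm_sub_le _ _
        _ ≤ C + ‖h x‖ := by
            have := h_leK (w - z); have := h_nonneg (w - z)
            rw [Real.norm_eq_abs, abs_of_nonneg ‹0 ≤ h (w-z)›]
            linarith
  have step1 : ∫ z, ρ z * h (w - z)
      ≤ (∫ z, ρ z * h x) + ∫ z, ρ z * ‖h (w - z) - h x‖ := by
    rw [← integral_add (ρb.integrable_normed.mul_const (h x)) hint3]
    apply integral_mono hint1 ((ρb.integrable_normed.mul_const (h x)).add hint3)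
    intro z
    have : h (w - z) ≤ h x + ‖h (w - z) - h x‖ := by
      rw [Real.norm_eq_abs]
      have := le_abs_self (h (w - z) - h x)
      linarith
    calc ρ z * h (w - z) ≤ ρ z * (h x + ‖h (w - z) - h x‖) :=
          mul_le_mul_of_nonneg_left this (ρb.nonneg_normed z)
      _ = ρ z * h x + ρ z * ‖h (w - z) - h x‖ := by ring
  have step2 : ∫ z, ρ z * h x = h x := by
    rw [integral_mul_const, ρb.integral_normed, one_mul]
  -- substitution
  have step3 : ∫ z, ρ z * ‖h (w - z) - h x‖ = ∫ u, ρ (w - u) * ‖h u - h x‖ := by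
    have := integral_sub_left_eq_self (fun u => ρ (w - u) * ‖h u - h x‖)
      (volume : Measure (Esp N)) w
    rw [← this]
    congr 1; ext z
    rw [sub_sub_cancel]
  set Mρ := (volume (closedBall (0 : Esp N) ρb.rIn)).toReal⁻¹ with hMρ
  have hMρ0 : 0 ≤ Mρ := inv_nonneg.2 ENNReal.toReal_nonneg
  have hρle : ∀ u, ρ u ≤ Mρ := by
    intro u
    have := ρb.normed_le_div_measure_closedBall_rIn volume u
    rwa [one_div] at this
  have hsupp : ∀ u : Esp N, ρ (w - u) ≠ 0 → u ∈ closedBall x (2*r) := by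
    intro u hu
    have : w - u ∈ Function.support ρ := hu
    rw [hρ, ρb.support_normed_eq (μ := volume), Metric.mem_ball, dist_zero_right] at this
    rw [Metric.mem_closedBall]
    calc dist u x ≤ dist u w + dist w x := dist_triangle _ _ _
      _ ≤ ρb.rOut + r := by
          rw [dist_comm u w, dist_eq_norm]
          exact add_le_add this.le hw
      _ ≤ 2*r := by linarith
  have hindint : Integrable ((closedBall x (2*r)).indicator fun u => Mρ * ‖h u - h x‖) volume := by
    rw [integrable_indicator_iff measurableSet_closedBall]
    apply Measure.integrableOn_of_bounded (M := Mρ * (C + ‖h x‖))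
      measure_closedBall_lt_top.ne
      (((h_meas.sub measurable_const).norm).const_mul Mρ).aestronglyMeasurable
    apply Eventually.of_forall; intro u
    rw [Real.norm_eq_abs, abs_of_nonneg (mul_nonneg hMρ0 (norm_nonneg _))]
    apply mul_le_mul_of_nonneg_left _ hMρ0
    calc ‖h u - h x‖ ≤ ‖h u‖ + ‖h x‖ := norm_sub_le _ _
      _ ≤ C + ‖h x‖ := by
          rw [Real.norm_eq_abs, abs_of_nonneg (h_nonneg u)]
          exact add_le_add_left (h_leK u) _
  have hle : ∀ u, ρ (w - u) * ‖h u - h x‖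
      ≤ (closedBall x (2*r)).indicator (fun u => Mρ * ‖h u - h x‖) u := by
    intro u
    by_cases hu : ρ (w - u) = 0
    · rw [hu, zero_mul]
      apply Set.indicator_nonneg
      intro a _; exact mul_nonneg hMρ0 (norm_nonneg _)
    · rw [Set.indicator_of_mem (hsupp u hu)]
      exact mul_le_mul_of_nonneg_right (hρle _) (norm_nonneg _)
  have hlhint : Integrable (fun u => ρ (w - u) * ‖h u - h x‖) volume := by
    apply Integrable.mono' hindint
    · exact ((ρb.continuous_normed.measurable.comp
        (measurable_const.sub measurable_id)).mul
        ((h_meas.sub measurable_const).norm)).aestronglyMeasurable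
    · apply Eventually.of_forall; intro u
      have : ‖ρ (w - u) * ‖h u - h x‖‖ = ρ (w - u) * ‖h u - h x‖ := by
        rw [Real.norm_eq_abs,
          abs_of_nonneg (mul_nonneg (ρb.nonneg_normed _) (norm_nonneg _))]
      rw [this]
      exact hle u
  have step4 : ∫ u, ρ (w - u) * ‖h u - h x‖
      ≤ Mρ * ∫ u in closedBall x (2*r), ‖h u - h x‖ := by
    calc ∫ u, ρ (w - u) * ‖h u - h x‖
        ≤ ∫ u, (closedBall x (2*r)).indicator (fun u => Mρ * ‖h u - h x‖) u := by
          exact integral_mono hlhint hindint hle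
      _ = ∫ u in closedBall x (2*r), Mρ * ‖h u - h x‖ :=
          integral_indicator measurableSet_closedBall
      _ = Mρ * ∫ u in closedBall x (2*r), ‖h u - h x‖ := integral_const_mul _ _
  calc ∫ z, ρ z * h (w - z) ≤ (∫ z, ρ z * h x) + ∫ z, ρ z * ‖h (w - z) - h x‖ := step1
    _ = h x + ∫ u, ρ (w - u) * ‖h u - h x‖ := by rw [step2, step3]
    _ ≤ h x + Mρ * ∫ u in closedBall x (2*r), ‖h u - h x‖ := add_le_add_right step4 _

lemma ratio_eq (hN : 0 < N) (x : Esp N) {δ r : ℝ} (hδ : 0 < δ) (hr : 0 < r) :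
    (volume (closedBall (0 : Esp N) (δ/2))).toReal⁻¹
      * (volume (closedBall x (2*r))).toReal = (4*r/δ)^N := by
  have hfin : Module.finrank ℝ (Esp N) = N := finrank_euclideanSpace_fin
  have h1 := Measure.addHaar_closedBall (volume : Measure (Esp N)) (0 : Esp N)
    (show (0:ℝ) ≤ δ/2 by positivity)
  have h2 := Measure.addHaar_closedBall (volume : Measure (Esp N)) x
    (show (0:ℝ) ≤ 2*r by positivity)
  rw [h1, h2, hfin]
  have hB0 : volume (Metric.ball (0 : Esp N) 1) ≠ 0 :=
    (measure_ball_pos volume _ one_pos).ne'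
  have hBt : volume (Metric.ball (0 : Esp N) 1) ≠ ⊤ := measure_ball_lt_top.ne
  set B := (volume (Metric.ball (0 : Esp N) 1)).toReal with hB
  have hBpos : 0 < B := ENNReal.toReal_pos hB0 hBt
  rw [ENNReal.toReal_mul, ENNReal.toReal_mul, ENNReal.toReal_ofReal (by positivity),
    ENNReal.toReal_ofReal (by positivity)]
  rw [mul_inv, ← hB]
  have hiden : (4*r/δ)^N = (2*r)^N / (δ/2)^N := by
    rw [← div_pow]
    congr 1
    field_simp
    ring
  rw [hiden]
  have hδ2 : (0:ℝ) < (δ/2)^N := by positivity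
  field_simp
end Avg


section Hard
variable {N : ℕ} {Y : Type*} [MetricSpace Y]

lemma segment_bound (c : Esp N → ℝ) (hc : ContDiff ℝ 1 c) (x y : Esp N) (C0 : ℝ)
    (hC0 : 0 ≤ C0) (hb : ∀ w, dist w x ≤ dist y x → |fderiv ℝ c w (y - x)| ≤ C0) :
    |c y - c x| ≤ C0 := by
  have h1 : ∀ t ∈ Set.uIcc (0:ℝ) 1, HasDerivAt (fun s : ℝ => c (x + s • (y - x)))
      (fderiv ℝ c (x + t • (y - x)) (y - x)) t := by
    intro t _
    have hcurve : HasDerivAt (fun s : ℝ => x + s • (y - x)) (y - x) t := by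
      simpa using ((hasDerivAt_id t).smul_const (y - x)).const_add x
    exact ((hc.differentiable one_ne_zero) _).hasFDerivAt.comp_hasDerivAt t hcurve
  have h2 : Continuous fun t : ℝ => fderiv ℝ c (x + t • (y - x)) (y - x) :=
    ((hc.continuous_fderiv one_ne_zero).comp (by continuity)).clm_apply continuous_const
  have h3 := intervalIntegral.integral_eq_sub_of_hasDerivAt h1 (h2.intervalIntegrable 0 1)
  simp only [one_smul, zero_smul, add_zero] at h3
  have h4 : x + (y - x) = y := by abel
  rw [h4] at h3
  rw [← h3, ← Real.norm_eq_abs]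
  have h5 := intervalIntegral.norm_integral_le_of_norm_le_const (C := C0)
    (f := fun t : ℝ => fderiv ℝ c (x + t • (y - x)) (y - x)) (a := 0) (b := 1) ?_
  · simpa using h5
  · intro t ht
    rw [Set.uIoc_of_le (by norm_num : (0:ℝ) ≤ 1)] at ht
    apply hb
    have : dist (x + t • (y - x)) x = |t| * ‖y - x‖ := by
      rw [dist_eq_norm, add_sub_cancel_left, norm_smul, Real.norm_eq_abs]
    rw [this, dist_eq_norm]
    calc |t| * ‖y - x‖ ≤ 1 * ‖y - x‖ :=
          mul_le_mul_of_nonneg_right (abs_le.2 ⟨by linarith [ht.1], ht.2⟩) (norm_nonneg _)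
      _ = ‖y - x‖ := one_mul _

lemma hard_dir (hN : 0 < N) [TopologicalSpace.SeparableSpace Y]
    {U : Set (Esp N)} (hU : IsOpen U)
    {f : Esp N → Y} {K : NNReal} (hf : LipschitzOnWith K f U) :
    ∀ᵐ x ∂(volume.restrict U),
      lipOn f U x ≤ ⨆ p : Y, ‖fderiv ℝ (fun z => dist (f z) p) x‖ := by
  have hYne : Nonempty Y := ⟨f 0⟩
  set e : ℕ → Y := TopologicalSpace.denseSeq Y with he
  have gLipAll : ∀ p : Y, LipschitzOnWith K (fun z => dist (f z) p) U := by
    intro p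
    have := (LipschitzWith.dist_left p).comp_lipschitzOnWith hf
    simpa [Function.comp_def] using this
  choose G hGlip hGeq using fun n => (gLipAll (e n)).extend_real
  set h : Esp N → ℝ := fun u => ⨆ n, ‖fderiv ℝ (G n) u‖ with hh
  have hfdK : ∀ n u, ‖fderiv ℝ (G n) u‖ ≤ (K:ℝ) :=
    fun n u => norm_fderiv_le_of_lipschitz ℝ (hGlip n)
  have hbdd : ∀ u, BddAbove (Set.range fun n => ‖fderiv ℝ (G n) u‖) :=
    fun u => ⟨K, by rintro - ⟨n, rfl⟩; exact hfdK n u⟩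
  have h_leK : ∀ u, h u ≤ (K:ℝ) := fun u => ciSup_le fun n => hfdK n u
  have h_nonneg : ∀ u, 0 ≤ h u := fun u => (norm_nonneg _).trans (le_ciSup (hbdd u) 0)
  have h_ge : ∀ n u, ‖fderiv ℝ (G n) u‖ ≤ h u := fun n u => le_ciSup (hbdd u) n
  have h_meas : Measurable h :=
    Measurable.iSup fun n => (measurable_fderiv ℝ (G n)).norm
  have h_loc : LocallyIntegrable h volume := by
    intro x
    refine ⟨closedBall x 1, closedBall_mem_nhds x one_pos, ?_⟩
    apply Measure.integrableOn_of_bounded (M := (K:ℝ)) measure_closedBall_lt_top.ne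
      h_meas.aestronglyMeasurable
    apply Eventually.of_forall
    intro u
    rw [Real.norm_eq_abs, abs_of_nonneg (h_nonneg u)]
    exact h_leK u
  have hleb : ∀ᵐ x ∂(volume : Measure (Esp N)),
      Tendsto (fun s => ⨍ u in closedBall x s, ‖h u - h x‖) (𝓝[>] 0) (𝓝 0) := by
    filter_upwards [IsUnifLocDoublingMeasure.ae_tendsto_average_norm_sub
      (μ := (volume : Measure (Esp N))) h_loc 1] with x hx
    have hev : ∀ᶠ s in 𝓝[>] (0:ℝ), x ∈ closedBall x (1 * s) := by
      filter_upwards [self_mem_nhdsWithin] with s hs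
      simp [Metric.mem_closedBall, le_of_lt (Set.mem_Ioi.1 hs)]
    exact hx (fun _ => x) id tendsto_id hev
  filter_upwards [ae_restrict_of_ae hleb, ae_restrict_mem hU.measurableSet] with x hlebx hxU
  -- bound the countable sup by the full sup
  have hfULip : ∀ p : Y, ∀ᶠ z in 𝓝 x, True := fun _ => Eventually.of_forall fun _ => trivial
  have hSbdd : BddAbove (Set.range fun p : Y => ‖fderiv ℝ (fun z => dist (f z) p) x‖) := by
    refine ⟨K, ?_⟩
    rintro - ⟨p, rfl⟩
    exact norm_fderiv_le_of_lipschitzOn ℝ (hU.mem_nhds hxU) (gLipAll p)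
  have hS : h x ≤ ⨆ p : Y, ‖fderiv ℝ (fun z => dist (f z) p) x‖ := by
    apply ciSup_le
    intro n
    have heqn : G n =ᶠ[𝓝 x] fun z => dist (f z) (e n) := by
      filter_upwards [hU.mem_nhds hxU] with z hz
      exact ((hGeq n) hz).symm
    rw [show fderiv ℝ (G n) x = fderiv ℝ (fun z => dist (f z) (e n)) x from heqn.fderiv_eq]
    exact le_ciSup hSbdd (e n)
  refine le_trans ?_ hS
  -- now prove lipOn f U x ≤ h x
  have hne := neBot_of hN hU hxU
  set L := 𝓝[U \ {x}] x with hL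
  set u : Esp N → ℝ := fun y => dist (f y) (f x) / dist y x with hu
  have hcob : IsCoboundedUnder (· ≤ ·) L u :=
    IsCoboundedUnder.of_frequently_ge
      ((Eventually.of_forall fun y => div_nonneg dist_nonneg dist_nonneg).frequently)
  have key : ∀ ε ∈ Set.Ioc (0:ℝ) 1, ∀ θ > (0:ℝ),
      ∀ᶠ y in L, u y ≤ h x + 2*K*ε + (4/ε)^N * θ := by
    intro ε hε θ hθ
    have htend : Tendsto (fun y => 2 * dist y x) L (𝓝[>] 0) := by
      apply tendsto_nhdsWithin_iff.2
      constructor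
      · have : Tendsto (fun y => dist y x) L (𝓝 (dist x x)) :=
          ((continuous_id.dist continuous_const).tendsto x).mono_left nhdsWithin_le_nhds
        rw [dist_self] at this
        simpa using this.const_mul 2
      · filter_upwards [self_mem_nhdsWithin] with y hy
        have : y ≠ x := hy.2
        have := dist_pos.2 this
        simp only [Set.mem_Ioi]
        linarith
    have hev2 : ∀ᶠ y in L, ⨍ w in closedBall x (2 * dist y x), ‖h w - h x‖ < θ :=
      htend.eventually (hlebx.eventually_lt_const hθ)
    filter_upwards [self_mem_nhdsWithin, hev2] with y hyU hyav
    set r := dist y x with hr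
    have hrpos : 0 < r := dist_pos.2 hyU.2
    set δ := ε * r with hδdef
    have hδpos : 0 < δ := mul_pos hε.1 hrpos
    have hδr : δ ≤ r := by
      calc δ = ε * r := rfl
        _ ≤ 1 * r := mul_le_mul_of_nonneg_right hε.2 hrpos.le
        _ = r := one_mul r
    set ρb : ContDiffBump (0 : Esp N) := ⟨δ/2, δ, by positivity, by linarith⟩ with hρb
    have hrOut : ρb.rOut = δ := rfl
    have hrIn : ρb.rIn = δ/2 := rfl
    set c : ℕ → Esp N → ℝ :=
      fun n => ρb.normed volume ⋆[ContinuousLinearMap.lsmul ℝ ℝ, volume] (G n) with hcdef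
    -- derivative bound on the segment
    have hMρ : (volume (closedBall (0 : Esp N) ρb.rIn)).toReal⁻¹
        * (volume (closedBall x (2*r))).toReal = (4/ε)^N := by
      rw [hrIn, ratio_eq hN x hδpos hrpos]
      congr 1
      rw [hδdef, div_eq_div_iff (mul_pos hε.1 hrpos).ne' hε.1.ne']
      ring
    have havg : ∫ w in closedBall x (2*r), ‖h w - h x‖
        = (volume (closedBall x (2*r))).toReal
            * ⨍ w in closedBall x (2*r), ‖h w - h x‖ := by
      rw [setAverage_eq, smul_eq_mul, ← mul_assoc, measureReal_def, mul_inv_cancel₀, one_mul]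
      exact ENNReal.toReal_ne_zero.2
        ⟨(measure_closedBall_pos volume _ (by positivity)).ne', measure_closedBall_lt_top.ne⟩
    have hB : (volume (closedBall (0 : Esp N) ρb.rIn)).toReal⁻¹
        * ∫ w in closedBall x (2*r), ‖h w - h x‖ ≤ (4/ε)^N * θ := by
      rw [havg, ← mul_assoc, hMρ]
      exact mul_le_mul_of_nonneg_left hyav.le
        (pow_nonneg (div_nonneg (by norm_num) hε.1.le) N)
    have hder : ∀ n, ∀ w, dist w x ≤ r →
        |fderiv ℝ (c n) w (y - x)| ≤ r * (h x + (4/ε)^N * θ) := by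
      intro n w hw
      have h1 := conv_deriv_bound ρb (hGlip n) h_meas h_leK h_nonneg (h_ge n) w (y - x)
      have h2 := avg_bound ρb h_meas h_leK h_nonneg hrpos (le_of_eq_of_le hrOut hδr) hw
      have h3 : ‖y - x‖ = r := by rw [← dist_eq_norm]
      calc |fderiv ℝ (c n) w (y - x)|
          ≤ (∫ z, ρb.normed volume z * h (w - z)) * ‖y - x‖ := h1
        _ ≤ (h x + (volume (closedBall (0 : Esp N) ρb.rIn)).toReal⁻¹
              * ∫ w in closedBall x (2*r), ‖h w - h x‖) * ‖y - x‖ := by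
            apply mul_le_mul_of_nonneg_right h2 (norm_nonneg _)
        _ ≤ (h x + (4/ε)^N * θ) * r := by
            rw [h3]
            apply mul_le_mul_of_nonneg_right (add_le_add_right hB _) hrpos.le
        _ = r * (h x + (4/ε)^N * θ) := mul_comm _ _
    have hcseg : ∀ n, |c n y - c n x| ≤ r * (h x + (4/ε)^N * θ) := by
      intro n
      apply segment_bound (c n) (conv_smooth ρb (hGlip n).continuous) x y _
        (mul_nonneg hrpos.le (add_nonneg (h_nonneg x)
          (mul_nonneg (pow_nonneg (div_nonneg (by norm_num) hε.1.le) N) hθ.le)))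
      intro w hw
      exact hder n w hw
    -- per-n estimate
    have hGest : ∀ n, G n x - G n y ≤ r * (h x + (4/ε)^N * θ) + 2*(K*δ) := by
      intro n
      have ha1 := conv_approx ρb (hGlip n) x
      have ha2 := conv_approx ρb (hGlip n) y
      rw [hrOut] at ha1 ha2
      have h5 := hcseg n
      have hax := abs_le.1 ha1
      have hay := abs_le.1 ha2
      have hc5 := abs_le.1 h5
      have : G n x - G n y ≤ (c n x - c n y) + 2*(K*δ) := by
        have := hax.2; have := hay.1
        simp only [hcdef] at *
        linarith
      have h6 : c n x - c n y ≤ r * (h x + (4/ε)^N * θ) := by linarith [hc5.1]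
      linarith
    -- dense approximation
    have hdist : dist (f y) (f x) ≤ r * (h x + (4/ε)^N * θ) + 2*(K*δ) := by
      apply le_of_forall_pos_le_add
      intro η hη
      obtain ⟨n, hn⟩ : ∃ n, dist (f y) (e n) < η/2 := by
        have := TopologicalSpace.denseRange_denseSeq Y
        exact Metric.denseRange_iff.1 this (f y) (η/2) (by positivity)
      have hGx : G n x = dist (f x) (e n) := ((hGeq n) hxU).symm
      have hGy : G n y = dist (f y) (e n) := ((hGeq n) hyU.1).symm
      have htri : dist (f y) (f x) ≤ dist (f x) (e n) - dist (f y) (e n)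
          + 2 * dist (f y) (e n) := by
        have := dist_triangle (f y) (e n) (f x)
        have h7 : dist (e n) (f x) = dist (f x) (e n) := dist_comm _ _
        linarith [dist_triangle (f y) (e n) (f x), h7.le]
      calc dist (f y) (f x) ≤ dist (f x) (e n) - dist (f y) (e n)
            + 2 * dist (f y) (e n) := htri
        _ = (G n x - G n y) + 2 * dist (f y) (e n) := by rw [hGx, hGy]
        _ ≤ r * (h x + (4/ε)^N * θ) + 2*(K*δ) + 2 * (η/2) := by
            have := hGest n
            linarith
        _ = r * (h x + (4/ε)^N * θ) + 2*(K*δ) + η := by ring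
    -- divide by r
    have : u y = dist (f y) (f x) / r := rfl
    rw [this, div_le_iff₀ hrpos]
    calc dist (f y) (f x) ≤ r * (h x + (4/ε)^N * θ) + 2*(K*δ) := hdist
      _ = (h x + 2*K*ε + (4/ε)^N * θ) * r := by rw [hδdef]; ring
  -- limsup step
  have hlim : ∀ ε ∈ Set.Ioc (0:ℝ) 1, ∀ θ > (0:ℝ),
      lipOn f U x ≤ h x + 2*K*ε + (4/ε)^N * θ := by
    intro ε hε θ hθ
    exact limsup_le_of_le hcob (key ε hε θ hθ)
  have hlim2 : ∀ ε ∈ Set.Ioc (0:ℝ) 1, lipOn f U x ≤ h x + 2*K*ε := by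
    intro ε hε
    apply le_of_forall_pos_le_add
    intro b hb
    have hpow : (0:ℝ) < (4/ε)^N := pow_pos (div_pos (by norm_num) hε.1) N
    have := hlim ε hε (b / (4/ε)^N) (div_pos hb hpow)
    rwa [mul_div_cancel₀ _ hpow.ne'] at this
  apply le_of_forall_pos_le_add
  intro b hb
  have h1 : (0:ℝ) < 2*K + 1 := by positivity
  set ε := min 1 (b / (2*K + 1)) with hε
  have hεpos : 0 < ε := lt_min one_pos (div_pos hb h1)
  have hεmem : ε ∈ Set.Ioc (0:ℝ) 1 := ⟨hεpos, min_le_left _ _⟩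
  have h2 := min_le_right (1:ℝ) (b / (2*K + 1))
  have h3 : 2*(K:ℝ)*ε ≤ b := by
    calc (2:ℝ)*K*ε ≤ 2*K*(b / (2*K + 1)) :=
          mul_le_mul_of_nonneg_left h2 (mul_nonneg (by norm_num) K.coe_nonneg)
      _ ≤ b := by
          rw [mul_div_assoc', div_le_iff₀ h1]
          nlinarith [K.coe_nonneg, hb.le]
  calc lipOn f U x ≤ h x + 2*K*ε := hlim2 ε hεmem
    _ ≤ h x + b := by linarith

end Hard


/-- For a Lipschitz function `f` on an open set `U ⊆ ℝ^N` with separable target,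
for a.e. `x₀ ∈ U` the pointwise Lipschitz constant equals the supremum over
`p ∈ Y` of the gradient norm of `x ↦ dist (f x) p` at `x₀` (the gradient norm
being `0`, via `fderiv = 0`, at non-differentiability points). -/
theorem stmt2 {N : ℕ} {Y : Type*} [MetricSpace Y] [TopologicalSpace.SeparableSpace Y]
    (U : Set (EuclideanSpace ℝ (Fin N))) (hU : IsOpen U)
    (f : EuclideanSpace ℝ (Fin N) → Y) (K : NNReal) (hf : LipschitzOnWith K f U) :
    ∀ᵐ x₀ ∂(volume.restrict U),
      lipOn f U x₀ = ⨆ p : Y, ‖fderiv ℝ (fun x => dist (f x) p) x₀‖ := by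
  rcases Nat.eq_zero_or_pos N with hN0 | hN
  · subst hN0
    refine Eventually.of_forall fun x => ?_
    have hYne : Nonempty Y := ⟨f x⟩
    have hsub : ∀ a b : EuclideanSpace ℝ (Fin 0), a = b := fun a b => Subsingleton.elim a b
    have h1 : U \ {x} = ∅ := by
      ext y
      simp only [Set.mem_diff, Set.mem_singleton_iff, Set.mem_empty_iff_false, iff_false]
      rintro ⟨-, hy⟩
      exact hy (hsub y x)
    have h2 : lipOn f U x = 0 := by
      show limsup (fun y => dist (f y) (f x) / dist y x) (𝓝[U \ {x}] x) = 0
      rw [h1, nhdsWithin_empty, limsup_eq]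
      have huniv : {a : ℝ | ∀ᶠ n in (⊥ : Filter (EuclideanSpace ℝ (Fin 0))),
          dist (f n) (f x) / dist n x ≤ a} = Set.univ := by
        ext a; simp
      rw [huniv]
      exact Real.sInf_of_not_bddBelow (not_bddBelow_univ)
    have h3 : ∀ p : Y, fderiv ℝ (fun z => dist (f z) p) x = 0 := by
      intro p
      have : (fun z : EuclideanSpace ℝ (Fin 0) => dist (f z) p)
          = fun _ => dist (f x) p := funext fun z => by rw [hsub z x]
      rw [this]
      exact fderiv_const_apply _
    rw [h2]
    symm
    simp only [h3, norm_zero]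
    exact ciSup_const
  · filter_upwards [hard_dir hN hU hf, ae_restrict_mem hU.measurableSet] with x h1 h2
    exact le_antisymm h1 (easy_dir hN hU hf h2)
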